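/- arXiv:2311.11612 — 3 statements merged into one kernel-verified Lean document; each statement's English description precedes it below -/
import Mathlib

section
/- Let Y be a proper geodesic metric space, y₀ ∈ Y, and f : Y → ℝ continuous and strictly convex along geodesics. If lim_{τ→+∞} f(γ(τ))/τ > 0 for every unit-speed geodesic ray γ emanating from y₀, then there exist C, D > 0 such that f(y) ≥ C·d(y, y₀) − D for all y ∈ Y. -/
open Filter Set Metric

/-- On a proper geodesic metric space (geodesics from `y₀` extendable to rays), if `f` is
continuous and strictly convex along geodesics, and the asymptotic slope of `f` is positive
along every unit-speed geodesic ray from `y₀`, then `f` grows at least linearly: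
`f(y) ≥ C·d(y,y₀) - D` for some `C, D > 0`. -/
theorem stmt_13 {Y : Type*} [MetricSpace Y] [ProperSpace Y] (y₀ : Y) (f : Y → ℝ)
    (hf : Continuous f)
    (hgeo : ∀ x y : Y, x ≠ y → ∃ γ : ℝ → Y, γ 0 = x ∧ γ (dist x y) = y ∧
      ∀ s ∈ Set.Icc 0 (dist x y), ∀ t ∈ Set.Icc 0 (dist x y), dist (γ s) (γ t) = |s - t|)
    (hext : ∀ (γ : ℝ → Y) (T : ℝ), 0 < T →
      (∀ s ∈ Set.Icc 0 T, ∀ t ∈ Set.Icc 0 T, dist (γ s) (γ t) = |s - t|) →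
      ∃ γ' : ℝ → Y, (∀ s ∈ Set.Icc 0 T, γ' s = γ s) ∧
        ∀ s ∈ Set.Ici (0 : ℝ), ∀ t ∈ Set.Ici (0 : ℝ), dist (γ' s) (γ' t) = |s - t|)
    (hconv : ∀ (γ : ℝ → Y) (a b : ℝ), a < b →
      (∀ s ∈ Set.Icc a b, ∀ t ∈ Set.Icc a b, dist (γ s) (γ t) = |s - t|) →
      γ a ≠ γ b → ∀ τ ∈ Set.Ioo a b,
        f (γ τ) < ((τ - a) / (b - a)) * f (γ b) + ((b - τ) / (b - a)) * f (γ a))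
    (hslope : ∀ γ : ℝ → Y, γ 0 = y₀ →
      (∀ s ∈ Set.Ici (0 : ℝ), ∀ t ∈ Set.Ici (0 : ℝ), dist (γ s) (γ t) = |s - t|) →
      ∃ L : EReal, 0 < L ∧
        Filter.Tendsto (fun t : ℝ => ((f (γ t) / t : ℝ) : EReal)) Filter.atTop (nhds L)) :
    ∃ C D : ℝ, 0 < C ∧ 0 < D ∧ ∀ y : Y, C * dist y y₀ - D ≤ f y := by
  by_cases hA : ∃ R : ℝ, 0 < R ∧ ∀ y : Y, dist y y₀ = R → f y₀ + 1 ≤ f y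
  · -- Case A: on some sphere, f ≥ f y₀ + 1; convexity gives linear growth.
    obtain ⟨R, hR, hRy⟩ := hA
    obtain ⟨z, hz, hzmin⟩ := (isCompact_closedBall y₀ R).exists_isMinOn
      ⟨y₀, mem_closedBall_self hR.le⟩ hf.continuousOn
    refine ⟨1/R, (1/R)*R + |f z| + |f y₀| + 1, by positivity, by positivity, ?_⟩
    intro y
    rcases le_or_gt (dist y y₀) R with hd | hd
    · have h1 : (1/R) * dist y y₀ ≤ (1/R) * R :=
        mul_le_mul_of_nonneg_left hd (by positivity)
      have h2 : f z ≤ f y := hzmin (by simpa [mem_closedBall] using hd)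
      have h3 : -|f z| ≤ f z := neg_abs_le _
      have h4 : (0:ℝ) ≤ |f y₀| := abs_nonneg _
      linarith
    · have hy0 : y₀ ≠ y := by
        intro h; rw [← h, dist_self] at hd; linarith
      obtain ⟨γ, hγ0, hγd, hiso⟩ := hgeo y₀ y hy0
      set d : ℝ := dist y₀ y with hdd
      have hdR : R < d := by rwa [hdd, dist_comm]
      have hd0 : 0 < d := lt_trans hR hdR
      have hne : γ 0 ≠ γ d := by
        intro h
        have h5 := hiso 0 ⟨le_refl 0, hd0.le⟩ d ⟨hd0.le, le_refl d⟩
        rw [h, dist_self] at h5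
        have h6 : |(0:ℝ) - d| = d := by
          rw [abs_of_nonpos (by linarith)]; ring
        rw [h6] at h5; linarith
      have hsph : dist (γ R) y₀ = R := by
        have h5 := hiso R ⟨hR.le, hdR.le⟩ 0 ⟨le_refl 0, hd0.le⟩
        rw [hγ0] at h5
        rw [h5, abs_of_nonneg (by linarith : (0:ℝ) ≤ R - 0)]; ring
      have hcv := hconv γ 0 d hd0 hiso hne R ⟨hR, hdR⟩
      rw [hγ0, hγd] at hcv
      have hlow : f y₀ + 1 ≤ f (γ R) := hRy _ hsph
      have hkey : d + R * f y₀ < R * f y := by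
        have h5 : d * (f y₀ + 1) < d * (((R - 0) / (d - 0)) * f y + ((d - R) / (d - 0)) * f y₀) :=
          mul_lt_mul_of_pos_left (lt_of_le_of_lt hlow hcv) hd0
        have h6 : d * (((R - 0) / (d - 0)) * f y + ((d - R) / (d - 0)) * f y₀)
            = R * f y + (d - R) * f y₀ := by
          simp only [sub_zero]; field_simp
        rw [h6] at h5; nlinarith
      rw [dist_comm, ← hdd]
      have h8 : (1/R) * d + f y₀ < f y := by
        rw [one_div, inv_mul_eq_div, div_add' _ _ _ hR.ne', div_lt_iff₀ hR]
        nlinarith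
      have h9 : -|f y₀| ≤ f y₀ := neg_abs_le _
      have h10 : (0:ℝ) ≤ (1/R)*R := by positivity
      have h11 : (0:ℝ) ≤ |f z| := abs_nonneg _
      linarith
  · -- Case B: every sphere has a point with f < f y₀ + 1. Build a ray with bounded f.
    push_neg at hA
    exfalso
    have hn : ∀ n : ℕ, ∃ y, dist y y₀ = (n:ℝ)+1 ∧ f y < f y₀ + 1 := by
      intro n
      obtain ⟨y, hy1, hy2⟩ := hA ((n:ℝ)+1) (by positivity)
      exact ⟨y, hy1, hy2⟩
    choose y hy1 hy2 using hn
    have hneq : ∀ n : ℕ, y₀ ≠ y n := by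
      intro n h
      have h1 := hy1 n
      rw [← h, dist_self] at h1
      have : (0:ℝ) < (n:ℝ)+1 := by positivity
      linarith
    have hdist : ∀ n : ℕ, dist y₀ (y n) = (n:ℝ)+1 := fun n => by
      rw [dist_comm]; exact hy1 n
    have hγex : ∀ n : ℕ, ∃ γ : ℝ → Y, γ 0 = y₀ ∧ γ ((n:ℝ)+1) = y n ∧
        ∀ s ∈ Icc (0:ℝ) ((n:ℝ)+1), ∀ t ∈ Icc (0:ℝ) ((n:ℝ)+1), dist (γ s) (γ t) = |s - t| := by
      intro n
      obtain ⟨γ, h0, h1, h2⟩ := hgeo y₀ (y n) (hneq n)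
      rw [hdist n] at h1 h2
      exact ⟨γ, h0, h1, h2⟩
    choose γ hγ0 hγ1 hγiso using hγex
    -- f is bounded by f y₀ + 1 along each geodesic
    have hbd : ∀ n : ℕ, ∀ τ ∈ Icc (0:ℝ) ((n:ℝ)+1), f (γ n τ) ≤ f y₀ + 1 := by
      intro n τ hτ
      rcases eq_or_lt_of_le hτ.1 with h0 | h0
      · rw [← h0, hγ0]; linarith
      rcases eq_or_lt_of_le hτ.2 with h1 | h1
      · rw [h1, hγ1]; exact (hy2 n).le
      have hNpos : (0:ℝ) < (n:ℝ)+1 := by positivity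
      have hnev : γ n 0 ≠ γ n ((n:ℝ)+1) := by
        intro h
        have h2 := hγiso n 0 ⟨le_refl _, hNpos.le⟩ ((n:ℝ)+1) ⟨hNpos.le, le_refl _⟩
        rw [h, dist_self] at h2
        rw [abs_of_nonpos (by linarith)] at h2
        linarith
      have hcv := hconv (γ n) 0 ((n:ℝ)+1) hNpos (hγiso n) hnev τ ⟨h0, h1⟩
      rw [hγ0, hγ1] at hcv
      set a : ℝ := (τ - 0) / ((n:ℝ)+1-0) with haa
      have ha1 : 0 ≤ a := by rw [haa]; apply div_nonneg <;> linarith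
      have ha2 : a ≤ 1 := by
        rw [haa, div_le_one (by linarith)]; linarith
      have hb : ((n:ℝ)+1-τ) / ((n:ℝ)+1-0) = 1 - a := by
        rw [haa]; field_simp; ring
      rw [hb] at hcv
      have hprod : 0 ≤ a * (f y₀ + 1 - f (y n)) :=
        mul_nonneg ha1 (by linarith [hy2 n])
      nlinarith
    -- clamped geodesics
    set g : ℕ → ℝ → Y := fun n t => γ n (max 0 (min t ((n:ℝ)+1))) with hg
    have hclamp : ∀ (n : ℕ) (t : ℝ), max 0 (min t ((n:ℝ)+1)) ∈ Icc (0:ℝ) ((n:ℝ)+1) := by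
      intro n t
      exact ⟨le_max_left _ _, max_le (by positivity) (min_le_right _ _)⟩
    have hgball : ∀ (n : ℕ) (t : ℝ), g n t ∈ closedBall y₀ (max t 0) := by
      intro n t
      have h1 := hγiso n _ (hclamp n t) 0 ⟨le_refl _, by exact add_nonneg (Nat.cast_nonneg n) zero_le_one⟩
      rw [hγ0] at h1
      rw [mem_closedBall]
      show dist (γ n (max 0 (min t ((n:ℝ)+1)))) y₀ ≤ max t 0
      rw [h1, sub_zero, abs_of_nonneg (le_max_left _ _)]
      exact max_le (le_max_right _ _) (le_trans (min_le_left _ _) (le_max_left _ _))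
    -- cluster point
    have hScomp : IsCompact (Set.pi univ fun t : ℝ => closedBall y₀ (max t 0)) :=
      isCompact_univ_pi fun t => isCompact_closedBall y₀ _
    have hFS : Filter.map g atTop ≤ 𝓟 (Set.pi univ fun t : ℝ => closedBall y₀ (max t 0)) := by
      rw [Filter.le_principal_iff, Filter.mem_map]
      exact Filter.univ_mem' fun n t _ => hgball n t
    obtain ⟨γ', hγ'S, hcl⟩ := hScomp.exists_clusterPt hFS
    have key : ∀ C : Set (ℝ → Y), IsClosed C → (∀ᶠ n in atTop, g n ∈ C) → γ' ∈ C := by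
      intro C hC hev
      have h1 : Filter.map g atTop ≤ 𝓟 C :=
        Filter.le_principal_iff.mpr (Filter.mem_map.mpr hev)
      have h2 := hcl.mono h1
      rwa [← mem_closure_iff_clusterPt, hC.closure_eq] at h2
    have h0 : γ' 0 = y₀ := by
      have : γ' ∈ {h : ℝ → Y | h 0 = y₀} := by
        apply key _ (isClosed_eq (continuous_apply 0) continuous_const)
        apply Filter.Eventually.of_forall
        intro n
        show γ n (max 0 (min 0 ((n:ℝ)+1))) = y₀
        rw [min_eq_left (by positivity), max_self, hγ0]
      exact this
    have hray : ∀ s ∈ Ici (0:ℝ), ∀ t ∈ Ici (0:ℝ), dist (γ' s) (γ' t) = |s - t| := by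
      intro s hs t ht
      have hs' : (0:ℝ) ≤ s := hs
      have ht' : (0:ℝ) ≤ t := ht
      have : γ' ∈ {h : ℝ → Y | dist (h s) (h t) = |s - t|} := by
        apply key _ (isClosed_eq ((continuous_apply s).dist (continuous_apply t)) continuous_const)
        filter_upwards [eventually_ge_atTop ⌈max s t⌉₊] with n hn
        have hcast : ((⌈max s t⌉₊ : ℕ) : ℝ) ≤ (n : ℝ) := Nat.cast_le.mpr hn
        have hmax : max s t ≤ (n:ℝ) + 1 :=
          le_trans (Nat.le_ceil _) (by linarith)
        have hsn : s ≤ (n:ℝ)+1 := le_trans (le_max_left _ _) hmax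
        have htn : t ≤ (n:ℝ)+1 := le_trans (le_max_right _ _) hmax
        show dist (γ n (max 0 (min s ((n:ℝ)+1)))) (γ n (max 0 (min t ((n:ℝ)+1)))) = |s - t|
        rw [min_eq_left hsn, max_eq_right hs', min_eq_left htn, max_eq_right ht']
        exact hγiso n s ⟨hs', hsn⟩ t ⟨ht', htn⟩
      exact this
    have hbound : ∀ t : ℝ, f (γ' t) ≤ f y₀ + 1 := by
      intro t
      have : γ' ∈ {h : ℝ → Y | f (h t) ≤ f y₀ + 1} := by
        apply key _ (isClosed_le (hf.comp (continuous_apply t)) continuous_const)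
        exact Filter.Eventually.of_forall fun n => hbd n _ (hclamp n t)
      exact this
    -- asymptotic slope of γ' must be positive, contradiction
    obtain ⟨L, hL, hLim⟩ := hslope γ' h0 hray
    obtain ⟨r, hr0, hrL⟩ := EReal.exists_between_coe_real hL
    have hr : (0:ℝ) < r := by exact_mod_cast hr0
    have hle : L ≤ (r : EReal) := by
      apply le_of_tendsto hLim
      filter_upwards [eventually_ge_atTop (max 1 ((|f y₀| + 1)/r))] with t ht
      have ht1 : (1:ℝ) ≤ t := le_trans (le_max_left _ _) ht
      have ht0 : (0:ℝ) < t := lt_of_lt_of_le one_pos ht1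
      have h3 : (|f y₀|+1)/r ≤ t := le_trans (le_max_right _ _) ht
      have h4 : |f y₀| + 1 ≤ r * t := by
        have := mul_le_mul_of_nonneg_left h3 hr.le
        rwa [mul_div_cancel₀ _ (ne_of_gt hr)] at this
      have h5 : f (γ' t) ≤ r * t := by
        have := hbound t
        have h6 : f y₀ ≤ |f y₀| := le_abs_self _
        linarith
      have h7 : f (γ' t) / t ≤ r := by
        rw [div_le_iff₀ ht0]; linarith [h5]
      exact_mod_cast h7
    exact absurd hle (not_le.mpr hrL)
end

section
/- Let Y be a proper geodesic metric space (with geodesics extendable to rays), y₀ ∈ Y, and f : Y → ℝ continuous and strictly convex along geodesics. Then the following are equivalent: (1) f admits a unique global minimum over Y; (2) f is proper and bounded below; (3) there exist C, D > 0 with f(y) ≥ C·d(y,y₀) − D for all y; (4) lim_{τ→∞} f(γ(τ))/τ > 0 for every unit-speed geodesic ray γ from y₀; (5) there is C > 0 with lim_{τ→∞} f(γ(τ))/τ > C for every such ray. -/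
open Filter Set Metric Topology

/-- Multiplied form of the strict convexity inequality. -/
lemma convex_mul_form {u v w a b τ : ℝ} (hab : a < b)
    (h : u < ((τ - a) / (b - a)) * v + ((b - τ) / (b - a)) * w) :
    (b - a) * u < (τ - a) * v + (b - τ) * w := by
  have hba : (0:ℝ) < b - a := sub_pos.2 hab
  have h2 := mul_lt_mul_of_pos_left h hba
  have e1 : (b - a) * ((τ - a) / (b - a) * v + (b - τ) / (b - a) * w)
      = (τ - a) * v + (b - τ) * w := by
    field_simp
  linarith [e1 ▸ h2]

/-- Uniqueness of global minimizers for strictly convex functions. -/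
lemma min_unique {Y : Type*} [MetricSpace Y] {f : Y → ℝ}
    (hgeo : ∀ x y : Y, x ≠ y → ∃ γ : ℝ → Y, γ 0 = x ∧ γ (dist x y) = y ∧
      ∀ s ∈ Set.Icc 0 (dist x y), ∀ t ∈ Set.Icc 0 (dist x y), dist (γ s) (γ t) = |s - t|)
    (hconv : ∀ (γ : ℝ → Y) (a b : ℝ), a < b →
      (∀ s ∈ Set.Icc a b, ∀ t ∈ Set.Icc a b, dist (γ s) (γ t) = |s - t|) →
      γ a ≠ γ b → ∀ τ ∈ Set.Ioo a b,
        f (γ τ) < ((τ - a) / (b - a)) * f (γ b) + ((b - τ) / (b - a)) * f (γ a))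
    {y₁ y₂ : Y} (h1 : ∀ y, f y₁ ≤ f y) (h2 : ∀ y, f y₂ ≤ f y) : y₁ = y₂ := by
  by_contra hne
  obtain ⟨γ, hγ0, hγd, hiso⟩ := hgeo y₁ y₂ hne
  set d := dist y₁ y₂ with hd
  have hd0 : 0 < d := dist_pos.2 hne
  have hne' : γ 0 ≠ γ d := by rw [hγ0, hγd]; exact hne
  have hval : f y₁ = f y₂ := le_antisymm (h1 y₂) (h2 y₁)
  have hineq := hconv γ 0 d hd0 (by simpa using hiso) hne' (d/2) ⟨by linarith, by linarith⟩
  have hmul := convex_mul_form hd0 hineq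
  rw [hγ0, hγd] at hmul
  -- (d - 0) * f (γ (d/2)) < (d/2 - 0) * f y₂ + (d - d/2) * f y₁
  have hminτ : f y₁ ≤ f (γ (d/2)) := h1 _
  nlinarith

/-- Along a geodesic segment, a convex function is bounded by the max of endpoint values. -/
lemma seg_bound {Y : Type*} [MetricSpace Y] {f : Y → ℝ}
    (hconv : ∀ (γ : ℝ → Y) (a b : ℝ), a < b →
      (∀ s ∈ Set.Icc a b, ∀ t ∈ Set.Icc a b, dist (γ s) (γ t) = |s - t|) →
      γ a ≠ γ b → ∀ τ ∈ Set.Ioo a b,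
        f (γ τ) < ((τ - a) / (b - a)) * f (γ b) + ((b - τ) / (b - a)) * f (γ a))
    {γ : ℝ → Y} {d B : ℝ} (hd : 0 < d)
    (hiso : ∀ s ∈ Set.Icc 0 d, ∀ t ∈ Set.Icc 0 d, dist (γ s) (γ t) = |s - t|)
    (hne : γ 0 ≠ γ d) (h0 : f (γ 0) ≤ B) (hdB : f (γ d) ≤ B)
    {t : ℝ} (ht : t ∈ Set.Icc 0 d) : f (γ t) ≤ B := by
  rcases eq_or_lt_of_le ht.1 with h | h
  · rw [← h]; exact h0
  rcases eq_or_lt_of_le ht.2 with h' | h'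
  · rw [h']; exact hdB
  have hineq := hconv γ 0 d hd hiso hne t ⟨h, h'⟩
  have hmul := convex_mul_form hd hineq
  nlinarith


/-- Main theorem: on a nonempty proper geodesic metric space in which every geodesic segment
extends to a ray, for a continuous `f : Y → ℝ` strictly convex along geodesics, the
following are equivalent: (1) `f` admits a unique global minimum; (2) `f` is proper and
bounded below; (3) `f(y) ≥ C·d(y,y₀) - D` for some `C, D > 0`; (4) the asymptotic slope of
`f` along every unit-speed geodesic ray from `y₀` is `> 0`; (5) there is `C > 0` such that
this asymptotic slope is `> C` for every such ray. -/
theorem stmt_14 {Y : Type*} [MetricSpace Y] [ProperSpace Y] [Nonempty Y] (y₀ : Y)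
    (f : Y → ℝ) (hf : Continuous f)
    (hgeo : ∀ x y : Y, x ≠ y → ∃ γ : ℝ → Y, γ 0 = x ∧ γ (dist x y) = y ∧
      ∀ s ∈ Set.Icc 0 (dist x y), ∀ t ∈ Set.Icc 0 (dist x y), dist (γ s) (γ t) = |s - t|)
    (hext : ∀ (γ : ℝ → Y) (T : ℝ), 0 < T →
      (∀ s ∈ Set.Icc 0 T, ∀ t ∈ Set.Icc 0 T, dist (γ s) (γ t) = |s - t|) →
      ∃ γ' : ℝ → Y, (∀ s ∈ Set.Icc 0 T, γ' s = γ s) ∧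
        ∀ s ∈ Set.Ici (0 : ℝ), ∀ t ∈ Set.Ici (0 : ℝ), dist (γ' s) (γ' t) = |s - t|)
    (hconv : ∀ (γ : ℝ → Y) (a b : ℝ), a < b →
      (∀ s ∈ Set.Icc a b, ∀ t ∈ Set.Icc a b, dist (γ s) (γ t) = |s - t|) →
      γ a ≠ γ b → ∀ τ ∈ Set.Ioo a b,
        f (γ τ) < ((τ - a) / (b - a)) * f (γ b) + ((b - τ) / (b - a)) * f (γ a)) :
    List.TFAE
      [ ∃! ystar : Y, ∀ y : Y, f ystar ≤ f y,
        (∀ a b : ℝ, IsCompact (f ⁻¹' Set.Icc a b)) ∧ BddBelow (Set.range f),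
        ∃ C D : ℝ, 0 < C ∧ 0 < D ∧ ∀ y : Y, C * dist y y₀ - D ≤ f y,
        ∀ γ : ℝ → Y, γ 0 = y₀ →
          (∀ s ∈ Set.Ici (0 : ℝ), ∀ t ∈ Set.Ici (0 : ℝ), dist (γ s) (γ t) = |s - t|) →
          ∃ L : EReal, 0 < L ∧
            Filter.Tendsto (fun t : ℝ => ((f (γ t) / t : ℝ) : EReal)) Filter.atTop (nhds L),
        ∃ C : ℝ, 0 < C ∧ ∀ γ : ℝ → Y, γ 0 = y₀ →
          (∀ s ∈ Set.Ici (0 : ℝ), ∀ t ∈ Set.Ici (0 : ℝ), dist (γ s) (γ t) = |s - t|) →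
          ∃ L : EReal, (C : EReal) < L ∧
            Filter.Tendsto (fun t : ℝ => ((f (γ t) / t : ℝ) : EReal)) Filter.atTop (nhds L)
      ] := by
  have huniqmin : ∀ {y₁ y₂ : Y}, (∀ y, f y₁ ≤ f y) → (∀ y, f y₂ ≤ f y) → y₁ = y₂ :=
    fun h1 h2 => min_unique hgeo hconv h1 h2
  tfae_have 1 → 3
  · intro h1
    obtain ⟨z, hzmin, huniq⟩ := h1
    set m := f z with hm
    by_cases hb : ∃ y₁, 1 ≤ dist z y₁
    · -- sphere of radius 1 around z is nonempty
      obtain ⟨y₁, hy₁⟩ := hb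
      have hne : z ≠ y₁ := by
        intro h; rw [h, dist_self] at hy₁; linarith
      obtain ⟨γ, hγ0, hγd, hiso⟩ := hgeo z y₁ hne
      have hsph : γ 1 ∈ Metric.sphere z 1 := by
        have := hiso 1 ⟨zero_le_one, hy₁⟩ 0 ⟨le_refl 0, by linarith⟩
        rw [hγ0] at this
        simpa [Metric.mem_sphere] using this
      obtain ⟨w, hwS, hwmin⟩ := (isCompact_sphere z 1).exists_isMinOn ⟨γ 1, hsph⟩
        hf.continuousOn
      have hwm : m < f w := by
        rcases eq_or_lt_of_le (hzmin w) with h | h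
        · exfalso
          have hwglob : ∀ y, f w ≤ f y := fun y => h ▸ hzmin y
          have : w = z := huniq w hwglob
          rw [this] at hwS
          simp [Metric.mem_sphere] at hwS
        · exact h
      set c := f w - m with hc
      have hc0 : 0 < c := by linarith
      -- growth estimate
      have key : ∀ y : Y, 1 ≤ dist z y → m + c * dist z y ≤ f y := by
        intro y hy
        have hney : z ≠ y := by
          intro h; rw [h, dist_self] at hy; linarith
        obtain ⟨σ, hσ0, hσd, hσiso⟩ := hgeo z y hney
        set R := dist z y with hR
        have hσ1 : σ 1 ∈ Metric.sphere z 1 := by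
          have := hσiso 1 ⟨zero_le_one, hy⟩ 0 ⟨le_refl 0, by linarith⟩
          rw [hσ0] at this
          simpa [Metric.mem_sphere] using this
        have hfσ1 : m + c ≤ f (σ 1) := by
          have := hwmin hσ1
          simpa [hc] using this
        rcases eq_or_lt_of_le hy with h | h
        · have : σ 1 = y := by rw [h]; exact hσd
          rw [← this, ← h]
          linarith [hfσ1]
        · have hR0 : (0:ℝ) < R := by linarith
          have hneσ : σ 0 ≠ σ R := by rw [hσ0, hσd]; exact hney
          have hineq := hconv σ 0 R hR0 hσiso hneσ 1 ⟨one_pos, h⟩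
          have hmul := convex_mul_form hR0 hineq
          rw [hσ0, hσd] at hmul
          -- (R - 0) * f (σ 1) < (1 - 0) * f y + (R - 1) * f z
          have h2 : R * (m + c) ≤ R * f (σ 1) :=
            mul_le_mul_of_nonneg_left hfσ1 hR0.le
          nlinarith
      refine ⟨c, c * dist z y₀ + c + |m| + 1, hc0, by positivity, fun y => ?_⟩
      rcases le_or_gt 1 (dist z y) with h | h
      · have htri : dist y y₀ ≤ dist z y + dist z y₀ := by
          rw [dist_comm z y]; exact dist_triangle y z y₀
        have h2 : c * dist y y₀ ≤ c * (dist z y + dist z y₀) :=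
          mul_le_mul_of_nonneg_left htri hc0.le
        rw [mul_add] at h2
        have h3 := key y h
        have h4 := neg_abs_le m
        linarith
      · have htri : dist y y₀ ≤ dist z y + dist z y₀ := by
          rw [dist_comm z y]; exact dist_triangle y z y₀
        have h2 : c * dist y y₀ ≤ c * (1 + dist z y₀) := by
          apply mul_le_mul_of_nonneg_left _ hc0.le
          linarith
        rw [mul_add, mul_one] at h2
        have h3 := hzmin y
        have h4 := neg_abs_le m
        linarith
    · push_neg at hb
      refine ⟨1, 2 + dist z y₀ + |m|, one_pos, by positivity, fun y => ?_⟩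
      have h1 : dist y y₀ ≤ dist z y + dist z y₀ := by
        rw [dist_comm z y]; exact dist_triangle y z y₀
      have h2 := hb y
      have h3 := hzmin y
      have h4 := neg_abs_le m
      linarith
  tfae_have 3 → 2
  · intro h3
    obtain ⟨C, D, hC, hD, hbd⟩ := h3
    constructor
    · intro a b
      apply Metric.isCompact_of_isClosed_isBounded (isClosed_Icc.preimage hf)
      apply (Metric.isBounded_closedBall (x := y₀) (r := (b + D) / C)).subset
      intro y hy
      have h1 := hbd y
      have h2 : f y ≤ b := hy.2
      rw [Metric.mem_closedBall]
      rw [le_div_iff₀ hC, mul_comm]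
      linarith
    · refine ⟨-D, fun v hv => ?_⟩
      obtain ⟨y, rfl⟩ := hv
      have h1 := hbd y
      nlinarith [mul_nonneg hC.le (dist_nonneg (x := y) (y := y₀))]
  tfae_have 2 → 1
  · intro h2
    obtain ⟨hcomp, m, hm⟩ := h2
    have hmle : ∀ y, m ≤ f y := fun y => hm ⟨y, rfl⟩
    have hK : IsCompact (f ⁻¹' Set.Icc m (f y₀)) := hcomp m (f y₀)
    obtain ⟨z, hzK, hzmin⟩ := hK.exists_isMinOn ⟨y₀, ⟨hmle y₀, le_refl _⟩⟩ hf.continuousOn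
    have hg : ∀ y, f z ≤ f y := by
      intro y
      rcases le_or_gt (f y) (f y₀) with h | h
      · exact hzmin ⟨hmle y, h⟩
      · exact le_trans (hzmin ⟨hmle y₀, le_refl _⟩) h.le
    exact ⟨z, hg, fun w hw => huniqmin hw hg⟩
  tfae_have 3 → 5
  · intro h3
    obtain ⟨C, D, hC, hD, hbd⟩ := h3
    refine ⟨C / 2, half_pos hC, fun γ hγ0 hiso => ?_⟩
    set g : ℝ → ℝ := fun t => f (γ t) with hg
    set q : ℝ → ℝ := fun t => (g t - g 0) / t with hq
    -- distance along the ray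
    have hdist : ∀ t : ℝ, 0 ≤ t → dist (γ t) y₀ = t := by
      intro t ht
      rw [← hγ0]
      rw [hiso t ht 0 (Set.mem_Ici.mpr le_rfl)]
      simp [abs_of_nonneg ht]
    -- slope monotonicity
    have hmono : ∀ t₁ t₂ : ℝ, 0 < t₁ → t₁ < t₂ → q t₁ < q t₂ := by
      intro t₁ t₂ h₁ h₂
      have h₂0 : (0:ℝ) < t₂ := h₁.trans h₂
      have hne : γ 0 ≠ γ t₂ := by
        intro h
        have := hdist t₂ h₂0.le
        rw [← h, hγ0, dist_self] at this
        linarith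
      have hineq := hconv γ 0 t₂ h₂0
        (fun s hs t ht => hiso s hs.1 t ht.1) hne t₁ ⟨h₁, h₂⟩
      have hmul := convex_mul_form h₂0 hineq
      rw [div_lt_div_iff₀ h₁ h₂0]
      -- (g t₁ - g 0) * t₂ < (g t₂ - g 0) * t₁
      nlinarith
    have hmono' : ∀ t₁ t₂ : ℝ, 0 < t₁ → t₁ ≤ t₂ → q t₁ ≤ q t₂ := by
      intro t₁ t₂ h₁ h₂
      rcases eq_or_lt_of_le h₂ with h | h
      · rw [h]
      · exact (hmono t₁ t₂ h₁ h).le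
    set M : ℝ → ℝ := fun t => q (max t 1) with hM
    have hMmono : Monotone M := by
      intro t t' h
      exact hmono' _ _ (lt_of_lt_of_le one_pos (le_max_right t 1))
        (max_le_max h le_rfl)
    have hMq : ∀ᶠ t in atTop, M t = q t := by
      filter_upwards [eventually_ge_atTop (1:ℝ)] with t ht
      rw [hM]; simp [max_eq_left ht]
    -- lower bound on g
    have hglb : ∀ t : ℝ, 0 ≤ t → C * t - D ≤ g t := by
      intro t ht
      have := hbd (γ t)
      rwa [hdist t ht] at this
    -- decomposition of g t / t
    have hdecomp : ∀ᶠ t in atTop, q t + g 0 / t = g t / t := by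
      filter_upwards [eventually_gt_atTop (0:ℝ)] with t ht
      simp only [hq]
      field_simp
      ring
    by_cases hbdd : BddAbove (Set.range M)
    · -- finite limit
      have hMl : Tendsto M atTop (𝓝 (⨆ t, M t)) := tendsto_atTop_ciSup hMmono hbdd
      have hql : Tendsto q atTop (𝓝 (⨆ t, M t)) := hMl.congr' hMq
      have hg0 : Tendsto (fun t : ℝ => g 0 / t) atTop (𝓝 0) :=
        Tendsto.div_atTop tendsto_const_nhds tendsto_id
      have hgt : Tendsto (fun t : ℝ => g t / t) atTop (𝓝 ((⨆ t, M t) + 0)) :=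
        (hql.add hg0).congr' hdecomp
      rw [add_zero] at hgt
      set ℓ := ⨆ t, M t with hℓ
      have hlbl : Tendsto (fun t : ℝ => C - D / t) atTop (𝓝 (C - 0)) :=
        tendsto_const_nhds.sub (Tendsto.div_atTop tendsto_const_nhds tendsto_id)
      rw [sub_zero] at hlbl
      have hCle : C ≤ ℓ := by
        apply le_of_tendsto_of_tendsto hlbl hgt
        filter_upwards [eventually_gt_atTop (0:ℝ)] with t ht
        have h1 := hglb t ht.le
        have h2 : C - D / t = (C * t - D) / t := by field_simp
        rw [h2]
        gcongr
      refine ⟨(ℓ : EReal), ?_, ?_⟩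
      · exact_mod_cast lt_of_lt_of_le (half_lt_self hC) hCle
      · exact EReal.tendsto_coe.2 hgt
    · -- limit is ⊤
      refine ⟨⊤, EReal.coe_lt_top _, ?_⟩
      rw [EReal.tendsto_nhds_top_iff_real]
      intro x
      rw [not_bddAbove_iff] at hbdd
      obtain ⟨_, ⟨t₀, rfl⟩, ht₀⟩ := hbdd (x + |g 0|)
      set t₁ := max t₀ 1 with ht₁
      have ht₁1 : (1:ℝ) ≤ t₁ := le_max_right _ _
      filter_upwards [eventually_ge_atTop (max t₁ 1)] with t ht
      have ht1 : (1:ℝ) ≤ t := le_trans (le_max_right _ _) ht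
      have ht0 : (0:ℝ) < t := lt_of_lt_of_le one_pos ht1
      have hqt : x + |g 0| < q t := by
        calc x + |g 0| < M t₀ := ht₀
          _ = q t₁ := rfl
          _ ≤ q t := hmono' _ _ (lt_of_lt_of_le one_pos ht₁1)
              (le_trans (le_max_left _ _) ht)
      have habs : |g 0 / t| ≤ |g 0| := by
        rw [abs_div]
        apply div_le_self (abs_nonneg _)
        rwa [abs_of_pos ht0]
      have h2 : -|g 0| ≤ g 0 / t := le_trans (neg_le_neg habs) (neg_abs_le _)
      have h3 : q t + g 0 / t = g t / t := by
        simp only [hq]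
        field_simp
        ring
      have : x < g t / t := by rw [← h3]; linarith
      exact_mod_cast this
  tfae_have 5 → 4
  · intro h5
    obtain ⟨C, hC, h⟩ := h5
    intro γ hγ0 hiso
    obtain ⟨L, hL, ht⟩ := h γ hγ0 hiso
    exact ⟨L, lt_trans (EReal.coe_pos.2 hC) hL, ht⟩
  tfae_have 4 → 1
  · intro h4
    -- Step 1: the sublevel set {f ≤ f y₀} is bounded.
    have hbdd : ∃ R : ℝ, ∀ y, f y ≤ f y₀ → dist y₀ y ≤ R := by
      by_contra hcon
      push_neg at hcon
      choose ypt hy1 hy2 using hcon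
      have hzne : ∀ n : ℕ, y₀ ≠ ypt ((n:ℝ) + 1) := by
        intro n h
        have := hy2 ((n:ℝ) + 1)
        rw [← h, dist_self] at this
        have : (0:ℝ) ≤ n := Nat.cast_nonneg n
        linarith
      choose σ hσ0 hσd hσiso using fun n : ℕ => hgeo y₀ (ypt ((n:ℝ)+1)) (hzne n)
      set d : ℕ → ℝ := fun n => dist y₀ (ypt ((n:ℝ)+1)) with hd
      have hdn : ∀ n : ℕ, (n:ℝ) + 1 < d n := fun n => hy2 _
      have hd0 : ∀ n : ℕ, 0 < d n := fun n => by
        have := hdn n; have : (0:ℝ) ≤ n := Nat.cast_nonneg n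
        have := hdn n; linarith
      have hσne : ∀ n : ℕ, σ n 0 ≠ σ n (d n) := by
        intro n
        rw [hσ0 n, hσd n]
        exact hzne n
      have hfb : ∀ n : ℕ, ∀ t ∈ Set.Icc 0 (d n), f (σ n t) ≤ f y₀ := by
        intro n t ht
        refine seg_bound hconv (hd0 n) (hσiso n) (hσne n) ?_ ?_ ht
        · rw [hσ0 n]
        · rw [hσd n]; exact hy1 _
      -- the ultrafilter
      set U : Ultrafilter ℕ := Ultrafilter.of Filter.atTop with hUdef
      have hU : (U : Filter ℕ) ≤ Filter.atTop := Ultrafilter.of_le _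
      have hmem : ∀ t : ℝ, 0 ≤ t → ∀ᶠ n in Filter.atTop, t ∈ Set.Icc 0 (d n) := by
        intro t ht
        filter_upwards [eventually_ge_atTop ⌈t⌉₊] with n hn
        have h1 : t ≤ (n : ℝ) := le_trans (Nat.le_ceil t) (by exact_mod_cast hn)
        exact ⟨ht, le_trans (by linarith [hdn n]) le_rfl⟩
      have key : ∀ t : ℝ, 0 ≤ t →
          ∃ p, Filter.Tendsto (fun n => σ n t) (U : Filter ℕ) (𝓝 p) := by
        intro t ht
        have hev : ∀ᶠ n in (U : Filter ℕ), σ n t ∈ Metric.closedBall y₀ t := by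
          apply Filter.Eventually.filter_mono hU
          filter_upwards [hmem t ht] with n hn
          rw [Metric.mem_closedBall, dist_comm, ← hσ0 n]
          rw [hσiso n 0 ⟨le_rfl, (hd0 n).le⟩ t hn]
          rw [abs_of_nonpos (by linarith)]
          linarith
        obtain ⟨p, _, hple⟩ := (isCompact_closedBall y₀ t).ultrafilter_le_nhds
          (U.map (fun n => σ n t))
          (le_principal_iff.mpr (Filter.mem_map.mpr hev))
        refine ⟨p, ?_⟩
        rw [Filter.Tendsto, ← Ultrafilter.coe_map]
        exact hple
      choose! γ hγ using key
      have hγ0 : γ 0 = y₀ := by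
        have h1 : Filter.Tendsto (fun n => σ n 0) (U : Filter ℕ) (𝓝 y₀) :=
          tendsto_const_nhds.congr (fun n => (hσ0 n).symm)
        exact tendsto_nhds_unique (hγ 0 le_rfl) h1
      have hγiso : ∀ s ∈ Set.Ici (0:ℝ), ∀ t ∈ Set.Ici (0:ℝ),
          dist (γ s) (γ t) = |s - t| := by
        intro s hs t ht
        have hs' : (0:ℝ) ≤ s := hs
        have ht' : (0:ℝ) ≤ t := ht
        have h1 : Filter.Tendsto (fun n => dist (σ n s) (σ n t)) (U : Filter ℕ)
            (𝓝 (dist (γ s) (γ t))) := (hγ s hs').dist (hγ t ht')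
        have h2 : ∀ᶠ n in (U : Filter ℕ), dist (σ n s) (σ n t) = |s - t| := by
          apply Filter.Eventually.filter_mono hU
          filter_upwards [hmem s hs', hmem t ht'] with n h1 h2
          exact hσiso n s h1 t h2
        have h3 : Filter.Tendsto (fun _ : ℕ => |s - t|) (U : Filter ℕ)
            (𝓝 (dist (γ s) (γ t))) := (tendsto_congr' h2).mp h1
        exact tendsto_nhds_unique h3 tendsto_const_nhds
      have hγbd : ∀ t : ℝ, 0 ≤ t → f (γ t) ≤ f y₀ := by
        intro t ht
        have h1 : Filter.Tendsto (fun n => f (σ n t)) (U : Filter ℕ)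
            (𝓝 (f (γ t))) := (hf.tendsto _).comp (hγ t ht)
        apply le_of_tendsto h1
        apply Filter.Eventually.filter_mono hU
        filter_upwards [hmem t ht] with n hn
        exact hfb n t hn
      obtain ⟨L, hL, hLt⟩ := h4 γ hγ0 hγiso
      obtain ⟨c, hc0, hcL⟩ := EReal.lt_iff_exists_real_btwn.1 hL
      have hcreal : (0:ℝ) < c := by exact_mod_cast hc0
      have hLle : L ≤ (c : EReal) := by
        apply le_of_tendsto hLt
        filter_upwards [eventually_ge_atTop (max 1 (|f y₀| / c))] with t htge
        have ht1 : (1:ℝ) ≤ t := le_trans (le_max_left _ _) htge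
        have ht0 : (0:ℝ) < t := lt_of_lt_of_le one_pos ht1
        have h1 : f (γ t) ≤ |f y₀| := le_trans (hγbd t ht0.le) (le_abs_self _)
        have h2 : f (γ t) / t ≤ |f y₀| / t := by gcongr
        have h3 : |f y₀| ≤ c * t := by
          have := le_trans (le_max_right 1 (|f y₀| / c)) htge
          rw [div_le_iff₀ hcreal] at this
          linarith [this]
        have h4' : |f y₀| / t ≤ c := by
          rw [div_le_iff₀ ht0]
          linarith
        exact EReal.coe_le_coe_iff.2 (le_trans h2 h4')
      exact absurd hLle (not_le.2 hcL)
    -- Step 2: minimum exists on the compact sublevel set.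
    obtain ⟨R, hR⟩ := hbdd
    have hKcl : IsClosed (f ⁻¹' Set.Iic (f y₀)) := isClosed_Iic.preimage hf
    have hKb : Bornology.IsBounded (f ⁻¹' Set.Iic (f y₀)) := by
      apply (Metric.isBounded_closedBall (x := y₀) (r := R)).subset
      intro y hy
      rw [Metric.mem_closedBall, dist_comm]
      exact hR y hy
    have hK : IsCompact (f ⁻¹' Set.Iic (f y₀)) :=
      Metric.isCompact_of_isClosed_isBounded hKcl hKb
    obtain ⟨z, hzK, hzmin⟩ := hK.exists_isMinOn ⟨y₀, Set.mem_preimage.mpr (Set.mem_Iic.mpr (le_refl _))⟩ hf.continuousOn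
    have hg : ∀ y, f z ≤ f y := by
      intro y
      rcases le_or_gt (f y) (f y₀) with h | h
      · exact hzmin h
      · exact le_trans (hzmin (Set.mem_preimage.mpr (Set.mem_Iic.mpr (le_refl _)))) h.le
    exact ⟨z, hg, fun w hw => huniqmin hw hg⟩
  tfae_finish
end

section
/- Let Y be a proper metric space with an isometric right action of a group H, y₀ ∈ Y, and f : Y → ℝ an H-invariant continuous function. If there exist C, D > 0 such that f(y) ≥ C·d_H(y, y₀) − D for all y ∈ Y, where d_H is the reduced distance, then f attains its infimum over Y. -/
/-- If an `H`-invariant continuous function `f` on a nonempty proper metric space with an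
isometric `H`-action satisfies `f(y) ≥ C·d_H(y, y₀) - D` with `C, D > 0` (where `d_H` is the
reduced distance), then `f` attains its infimum. -/
theorem stmt_16 {Y : Type*} [MetricSpace Y] [ProperSpace Y] [Nonempty Y]
    {H : Type*} [Group H] [MulAction H Y]
    (hiso : ∀ h : H, Isometry fun y : Y => h • y)
    (f : Y → ℝ) (hf : Continuous f) (hinv : ∀ (h : H) (y : Y), f (h • y) = f y)
    (y₀ : Y) (C D : ℝ) (hC : 0 < C) (hD : 0 < D)
    (hbound : ∀ y : Y, C * (⨅ p : H × H, dist (p.1 • y) (p.2 • y₀)) - D ≤ f y) :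
    ∃ ystar : Y, ∀ y : Y, f ystar ≤ f y := by
  obtain ⟨R, hR⟩ : ∃ R : ℝ, R = (f y₀ + D) / C + 1 := ⟨_, rfl⟩
  have hfy0 : -D ≤ f y₀ := by
    have h0 : (0:ℝ) ≤ ⨅ p : H × H, dist (p.1 • y₀) (p.2 • y₀) :=
      Real.iInf_nonneg fun p => dist_nonneg
    nlinarith [hbound y₀]
  have hRpos : (0:ℝ) ≤ R := by
    have : 0 ≤ (f y₀ + D) / C := div_nonneg (by linarith) hC.le
    linarith
  have hy0mem : y₀ ∈ Metric.closedBall y₀ R := by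
    simp [Metric.mem_closedBall, hRpos]
  obtain ⟨ystar, hmem, hmin⟩ :=
    (isCompact_closedBall y₀ R).exists_isMinOn ⟨y₀, hy0mem⟩ hf.continuousOn
  refine ⟨ystar, fun y => ?_⟩
  by_cases hy : f y ≤ f y₀
  · have hinf : (⨅ p : H × H, dist (p.1 • y) (p.2 • y₀)) < R := by
      have h1 := hbound y
      have h2 : (⨅ p : H × H, dist (p.1 • y) (p.2 • y₀)) ≤ (f y₀ + D) / C := by
        rw [le_div_iff₀ hC]
        nlinarith
      linarith
    obtain ⟨p, hp⟩ := exists_lt_of_ciInf_lt hinf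
    have hd : dist ((p.2⁻¹ * p.1) • y) y₀ < R := by
      have he : dist (p.2⁻¹ • (p.1 • y)) (p.2⁻¹ • (p.2 • y₀)) = dist (p.1 • y) (p.2 • y₀) :=
        (hiso p.2⁻¹).dist_eq _ _
      rw [inv_smul_smul] at he
      rw [mul_smul, he]
      exact hp
    have hfeq : f ((p.2⁻¹ * p.1) • y) = f y := hinv _ _
    calc f ystar ≤ f ((p.2⁻¹ * p.1) • y) := hmin (Metric.mem_closedBall.2 hd.le)
      _ = f y := hfeq
  · have h0 : f ystar ≤ f y₀ := hmin hy0mem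
    linarith [not_le.1 hy]
end
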